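/- (Higman-type theorem) If ⪯ is a wqo on A, then the order ≪ on A* defined by: for s = (a_i)_{i<k} and t = (b_i)_{i<n}, t ≪ s iff either n = k = 0, or n ≥ k > 0 and a_k ⪯ b_n and s ⊴ t' for some subsequence t' of t (where s ⊴ t' means s and t' have equal length and entries are pairwise ⪯-related), is a wqo on A*. -/

import Mathlib

/-- A relation `r` is a well-quasi-order: every infinite sequence contains an
infinite subsequence which is an `r`-chain. -/
def IsWqo {A : Type*} (r : A → A → Prop) : Prop :=
  ∀ f : ℕ → A, ∃ g : ℕ → ℕ, StrictMono g ∧ ∀ i j : ℕ, i < j → r (f (g i)) (f (g j))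

/-- The order `≪` of the paper: `Ll r t s` says `t ≪ s`, i.e. either both `s`
and `t` are empty, or both are nonempty, `t` is at least as long as `s`, the
last entry of `s` is `r`-related to the last entry of `t`, and `s` is
`Forall₂ r`-related (`⊴`) to some subsequence `t'` of `t`. -/
def Ll {A : Type*} (r : A → A → Prop) (t s : List A) : Prop :=
  (s = [] ∧ t = []) ∨
    (s ≠ [] ∧ t ≠ [] ∧ s.length ≤ t.length ∧
      (∀ a ∈ s.getLast?, ∀ b ∈ t.getLast?, r a b) ∧
      ∃ t' : List A, t'.Sublist t ∧ List.Forall₂ r s t')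

/-- One step of the Ramsey construction. -/
theorem ramsey_step (P : ℕ → ℕ → Prop) {s : Set ℕ} (hs : s.Infinite) (a : ℕ) :
    ∃ t : Set ℕ, t ⊆ s ∧ t.Infinite ∧ (∀ n ∈ t, a < n) ∧
      ((∀ n ∈ t, P a n) ∨ (∀ n ∈ t, ¬P a n)) := by
  classical
  set s' : Set ℕ := {n ∈ s | a < n} with hs'
  have hs'inf : s'.Infinite := by
    have hsub : s \ Set.Iic a ⊆ s' := by
      intro n hn; exact ⟨hn.1, by simpa using hn.2⟩
    exact (hs.diff (Set.finite_Iic a)).mono hsub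
  by_cases hp : {n ∈ s' | P a n}.Infinite
  · exact ⟨{n ∈ s' | P a n}, fun n hn => hn.1.1, hp, fun n hn => hn.1.2,
      Or.inl fun n hn => hn.2⟩
  · refine ⟨{n ∈ s' | ¬P a n}, fun n hn => hn.1.1, ?_, fun n hn => hn.1.2,
      Or.inr fun n hn => hn.2⟩
    by_contra hq
    rw [Set.not_infinite] at hp hq
    have hcup : s' ⊆ {n ∈ s' | P a n} ∪ {n ∈ s' | ¬P a n} := by
      intro n hn; by_cases h : P a n
      exacts [Or.inl ⟨hn, h⟩, Or.inr ⟨hn, h⟩]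
    exact hs'inf ((hp.union hq).subset hcup)

/-- Infinite Ramsey theorem for pairs (two colours). -/
theorem ramsey_pairs (P : ℕ → ℕ → Prop) :
    ∃ g : ℕ → ℕ, StrictMono g ∧
      ((∀ i j, i < j → P (g i) (g j)) ∨ (∀ i j, i < j → ¬P (g i) (g j))) := by
  classical
  let Inv : ℕ × Set ℕ → Prop := fun q =>
    q.2.Infinite ∧ (∀ n ∈ q.2, q.1 < n) ∧ ((∀ n ∈ q.2, P q.1 n) ∨ (∀ n ∈ q.2, ¬P q.1 n))
  have key : ∀ q : ℕ × Set ℕ, Inv q → ∃ q' : ℕ × Set ℕ,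
      Inv q' ∧ q'.1 ∈ q.2 ∧ q'.2 ⊆ q.2 := by
    rintro ⟨av, s⟩ ⟨hinf, hgt, -⟩
    obtain ⟨b, hb⟩ := hinf.nonempty
    obtain ⟨t, hts, htinf, htgt, hthom⟩ := ramsey_step P hinf b
    exact ⟨(b, t), ⟨htinf, htgt, hthom⟩, hb, hts⟩
  choose step hstep using key
  obtain ⟨t0, -, ht0inf, ht0gt, ht0hom⟩ := ramsey_step P (Set.infinite_univ (α := ℕ)) 0
  have hInv0 : Inv (0, t0) := ⟨ht0inf, ht0gt, ht0hom⟩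
  let F : ℕ → {q : ℕ × Set ℕ // Inv q} := fun n =>
    Nat.rec ⟨(0, t0), hInv0⟩ (fun _ p => ⟨step p.1 p.2, (hstep p.1 p.2).1⟩) n
  set a : ℕ → ℕ := fun k => ((F k).1).1 with ha
  set S : ℕ → Set ℕ := fun k => ((F k).1).2 with hS
  have hmem : ∀ k, a (k + 1) ∈ S k := fun k => (hstep (F k).1 (F k).2).2.1
  have hsub : ∀ k, S (k + 1) ⊆ S k := fun k => (hstep (F k).1 (F k).2).2.2
  have hgt : ∀ k, ∀ n ∈ S k, a k < n := fun k => (F k).2.2.1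
  have hhom : ∀ k, (∀ n ∈ S k, P (a k) n) ∨ (∀ n ∈ S k, ¬P (a k) n) :=
    fun k => (F k).2.2.2
  have hsubs : ∀ k l, k ≤ l → S l ⊆ S k := by
    intro k l hkl
    induction l with
    | zero => have : k = 0 := Nat.le_zero.1 hkl; subst this; exact subset_rfl
    | succ l ih =>
      rcases Nat.le_succ_iff_eq_or_le.1 hkl with h | h
      · subst h; exact subset_rfl
      · exact (hsub l).trans (ih h)
  have hmem' : ∀ k l, k < l → a l ∈ S k := by
    intro k l hkl
    obtain ⟨m, rfl⟩ := Nat.exists_eq_add_of_lt hkl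
    exact hsubs k (k + m) (Nat.le_add_right _ _) (hmem (k + m))
  have hamono : StrictMono a :=
    strictMono_nat_of_lt_succ fun k => hgt k _ (hmem k)
  let c : ℕ → Prop := fun k => ∀ n ∈ S k, P (a k) n
  have hcases : ∀ k l, k < l → (c k → P (a k) (a l)) ∧ (¬c k → ¬P (a k) (a l)) := by
    intro k l hkl
    refine ⟨fun hc => hc _ (hmem' k l hkl), fun hc => ?_⟩
    rcases hhom k with h | h
    · exact absurd h hc
    · exact h _ (hmem' k l hkl)
  by_cases hI : {k | c k}.Infinite
  · obtain ⟨φ, hφ, hcφ⟩ := Nat.exists_strictMono_subsequence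
      (fun N => by
        obtain ⟨b, hb, hbN⟩ := hI.exists_gt N
        exact ⟨b, hbN, hb⟩)
    exact ⟨a ∘ φ, hamono.comp hφ, Or.inl fun i j hij =>
      (hcases (φ i) (φ j) (hφ hij)).1 (hcφ i)⟩
  · have hI' : {k | ¬c k}.Infinite := by
      by_contra hq
      rw [Set.not_infinite] at hI hq
      have : (Set.univ : Set ℕ) ⊆ {k | c k} ∪ {k | ¬c k} := by
        intro k _; by_cases h : c k
        exacts [Or.inl h, Or.inr h]
      exact Set.infinite_univ ((hI.union hq).subset this)
    obtain ⟨φ, hφ, hcφ⟩ := Nat.exists_strictMono_subsequence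
      (fun N => by
        obtain ⟨b, hb, hbN⟩ := hI'.exists_gt N
        exact ⟨b, hbN, hb⟩)
    exact ⟨a ∘ φ, hamono.comp hφ, Or.inr fun i j hij =>
      (hcases (φ i) (φ j) (hφ hij)).2 (hcφ i)⟩

/-- From a partially well-ordered relation (no transitivity assumed!), every
sequence has a subsequence forming a full chain. -/
theorem chain_of_pwo {B : Type*} {Q : B → B → Prop} {s : Set B}
    (h : s.PartiallyWellOrderedOn Q) (f : ℕ → B) (hf : ∀ n, f n ∈ s) :
    ∃ g : ℕ → ℕ, StrictMono g ∧ ∀ i j, i < j → Q (f (g i)) (f (g j)) := by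
  obtain ⟨g, hg, hgood | hbad⟩ := ramsey_pairs (fun m n => Q (f m) (f n))
  · exact ⟨g, hg, hgood⟩
  · exfalso
    obtain ⟨m, n, hmn, hQ⟩ := h.exists_lt (f := f ∘ g) (fun n => hf _)
    exact hbad m n hmn hQ

open Set in
/-- Higman's lemma without transitivity (adapted from Mathlib's
`Set.PartiallyWellOrderedOn.partiallyWellOrderedOn_sublistForall₂`). -/
theorem myHigman {α : Type*} (r : α → α → Prop) [IsRefl α r]
    {s : Set α} (h : s.PartiallyWellOrderedOn r) :
    { l : List α | ∀ x, x ∈ l → x ∈ s }.PartiallyWellOrderedOn (List.SublistForall₂ r) := by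
  rcases isEmpty_or_nonempty α
  · exact subsingleton_of_subsingleton.partiallyWellOrderedOn
  inhabit α
  rw [Set.PartiallyWellOrderedOn.iff_not_exists_isMinBadSeq List.length]
  rintro ⟨f, hf1, hf2⟩
  have hnil : ∀ n, f n ≠ List.nil := fun n con =>
    hf1.2 n n.succ n.lt_succ_self (con.symm ▸ List.SublistForall₂.nil)
  have : ∀ n, (f n).headI ∈ s :=
    fun n => hf1.1 n _ (List.head!_mem_self (hnil n))
  obtain ⟨g, hgs, hg⟩ := chain_of_pwo h (fun n => (f n).headI) this
  have hf' :=
    hf2 (g 0) (fun n => if n < g 0 then f n else List.tail (f (g (n - g 0))))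
      (fun m hm => (if_pos hm).symm) ?_
  swap
  · simp only [if_neg (lt_irrefl (g 0)), Nat.sub_self]
    rw [List.length_tail, ← Nat.pred_eq_sub_one]
    exact Nat.pred_lt fun con => hnil _ (List.length_eq_zero_iff.1 con)
  rw [Set.PartiallyWellOrderedOn.IsBadSeq] at hf'
  push_neg at hf'
  obtain ⟨m, n, mn, hmn⟩ := hf' fun n x hx => by
    split_ifs at hx with hn
    exacts [hf1.1 _ _ hx, hf1.1 _ _ (List.tail_subset _ hx)]
  by_cases hn : n < g 0
  · apply hf1.2 m n mn
    rwa [if_pos hn, if_pos (mn.trans hn)] at hmn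
  · obtain ⟨n', rfl⟩ := Nat.exists_eq_add_of_le (not_lt.1 hn)
    rw [if_neg hn, add_comm (g 0) n', Nat.add_sub_cancel_right] at hmn
    split_ifs at hmn with hm
    · apply hf1.2 m (g n') (lt_of_lt_of_le hm (hgs.monotone n'.zero_le))
      rw [List.sublistForall₂_iff] at hmn ⊢
      obtain ⟨l, h1, h2⟩ := hmn
      exact ⟨l, h1, h2.trans (List.tail_sublist _)⟩
    · rw [← Nat.sub_lt_iff_lt_add' (le_of_not_gt hm)] at mn
      apply hf1.2 _ _ (hgs mn)
      rw [← List.cons_head!_tail (hnil (g (m - g 0))), ← List.cons_head!_tail (hnil (g n'))]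
      exact List.SublistForall₂.cons (hg _ _ mn) hmn

/-- Higman-type theorem: if `r` is a wqo on `A` then `≪` is a wqo on `A*`
(the wqo chains going from the embedded list to the embedding one). -/
theorem ll_isWqo {A : Type*} (r : A → A → Prop) (h : IsWqo r) :
    IsWqo (fun s t : List A => Ll r t s) := by
  classical
  haveI : IsRefl A r := ⟨fun a => by
    obtain ⟨g, hg, hc⟩ := h (fun _ => a)
    exact hc 0 1 one_pos⟩
  intro f
  by_cases hinf : ∃ᶠ n in Filter.atTop, f n = []
  · obtain ⟨φ, hφ, hP⟩ := Filter.extraction_of_frequently_atTop hinf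
    exact ⟨φ, hφ, fun i j _ => Or.inl ⟨hP i, hP j⟩⟩
  · rw [Filter.not_frequently, Filter.eventually_atTop] at hinf
    obtain ⟨N, hN⟩ := hinf
    set F0 : ℕ → List A := fun n => f (n + N) with hF0
    have hne : ∀ n, F0 n ≠ [] := fun n => hN (n + N) (Nat.le_add_left _ _)
    have hAne : Nonempty A := by
      rcases List.exists_mem_of_ne_nil _ (hne 0) with ⟨a, _⟩
      exact ⟨a⟩
    obtain ⟨a₀⟩ := hAne
    -- last elements
    set L : ℕ → A := fun n => (F0 n).getLast?.getD a₀ with hL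
    obtain ⟨g1, hg1, hc1⟩ := h L
    set F1 : ℕ → List A := fun n => F0 (g1 n) with hF1
    -- lengths
    have pwoN : (Set.univ : Set ℕ).IsPWO := (Set.isWF_univ_iff.2 ⟨wellFounded_lt⟩).isPWO
    obtain ⟨g2, hg2⟩ := pwoN.exists_monotone_subseq (f := fun n => (F1 n).length)
      (fun n => Set.mem_univ _)
    set F2 : ℕ → List A := fun n => F1 (g2 n) with hF2
    -- Higman
    have hpwo : (Set.univ : Set A).PartiallyWellOrderedOn r := by
      refine Set.partiallyWellOrderedOn_iff_exists_lt.2 ?_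
      intro u _
      obtain ⟨g, hg, hc⟩ := h u
      exact ⟨g 0, g 1, hg one_pos, hc 0 1 one_pos⟩
    obtain ⟨g3, hg3m, hg3⟩ := chain_of_pwo (myHigman r hpwo) F2
      (fun n x _ => Set.mem_univ x)
    refine ⟨fun n => g1 (g2 (g3 n)) + N, ?_, ?_⟩
    · exact fun i j hij =>
        Nat.add_lt_add_right (hg1 (g2.strictMono (hg3m hij))) N
    · intro i j hij
      have hfi : f (g1 (g2 (g3 i)) + N) = F2 (g3 i) := rfl
      have hfj : f (g1 (g2 (g3 j)) + N) = F2 (g3 j) := rfl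
      rw [hfi, hfj]
      refine Or.inr ⟨hne _, hne _, ?_, ?_, ?_⟩
      · exact hg2 (hg3m hij).le
      · intro x hx y hy
        have hx' : (F0 (g1 (g2 (g3 i)))).getLast? = some x := hx
        have hy' : (F0 (g1 (g2 (g3 j)))).getLast? = some y := hy
        have hcc := hc1 (g2 (g3 i)) (g2 (g3 j)) (g2.strictMono (hg3m hij))
        simpa only [hL, hx', hy', Option.getD_some] using hcc
      · have h' := hg3 i j hij
        rw [List.sublistForall₂_iff] at h'
        obtain ⟨l, h1, h2⟩ := h'
        exact ⟨l, h2, h1⟩
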